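/- There exists an absolute constant C > 0 such that: for every m ≥ 1 and every monadic TSLP H over Σ_m all of whose productions have one of the forms A → B(C); A(x) → B(C(x)); A → f(B,C) with f ∈ {+,·}; A(x) → f(x,B) or A(x) → f(B,x) with f ∈ {+,·}; A → a with a ∈ {0, 1, y₁, …, y_m}; A(x) → B(x); A(x) → x, there exists an arithmetical circuit D over Σ_m of size at most C·|H| and depth at most C·depth(H) such that for every semiring S and every valuation ν : {y₁,…,y_m} → S, the circuit D evaluates in S under ν to the same element as the tree val(H). -/

import Mathlib

universe u v

inductive RTree (L : Type u) : Type u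
  | node : L → List (RTree L) → RTree L

namespace RTree

def size {L : Type u} : RTree L → ℕ
  | .node _ ts => 1 + (ts.attach.map (fun x => x.1.size)).sum
termination_by t => sizeOf t
decreasing_by simp_wf; have := List.sizeOf_lt_of_mem x.2; omega

def labelsList {L : Type u} : RTree L → List L
  | .node f ts => f :: (ts.attach.map (fun x => x.1.labelsList)).flatten
termination_by t => sizeOf t
decreasing_by simp_wf; have := List.sizeOf_lt_of_mem x.2; omega

def map {L : Type u} {L' : Type v} (g : L → L') : RTree L → RTree L'
  | .node f ts => .node (g f) (ts.attach.map (fun x => x.1.map g))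
termination_by t => sizeOf t
decreasing_by simp_wf; have := List.sizeOf_lt_of_mem x.2; omega

/-- Number of non-parameter nodes of a tree whose leaves may be labelled with
parameters (the right summand `ℕ` is the set of parameters). -/
def psize {L : Type u} : RTree (L ⊕ ℕ) → ℕ
  | .node (Sum.inl _) ts => 1 + (ts.attach.map (fun x => x.1.psize)).sum
  | .node (Sum.inr _) ts => (ts.attach.map (fun x => x.1.psize)).sum
termination_by t => sizeOf t
decreasing_by all_goals (simp_wf; have := List.sizeOf_lt_of_mem x.2; omega)

/-- The list of parameters occurring in a tree, in depth-first left-to-right order. -/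
def paramList {L : Type u} : RTree (L ⊕ ℕ) → List ℕ
  | .node (Sum.inl _) ts => (ts.attach.map (fun x => x.1.paramList)).flatten
  | .node (Sum.inr i) _ => [i]
termination_by t => sizeOf t
decreasing_by simp_wf; have := List.sizeOf_lt_of_mem x.2; omega

/-- Substitution of trees for parameters. -/
def subst {L : Type u} (g : ℕ → RTree (L ⊕ ℕ)) : RTree (L ⊕ ℕ) → RTree (L ⊕ ℕ)
  | .node (Sum.inl a) ts => .node (Sum.inl a) (ts.attach.map (fun x => x.1.subst g))
  | .node (Sum.inr i) _ => g i
termination_by t => sizeOf t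
decreasing_by simp_wf; have := List.sizeOf_lt_of_mem x.2; omega

/-- The tree consisting of a single node labelled with parameter `i`. -/
def param {L : Type u} (i : ℕ) : RTree (L ⊕ ℕ) := .node (Sum.inr i) []

inductive WF {L : Type u} (rk : L → ℕ) : RTree L → Prop
  | node {f : L} {ts : List (RTree L)} :
      ts.length = rk f → (∀ t ∈ ts, WF rk t) → WF rk (.node f ts)

end RTree

/-- Expansion of a pattern over nonterminals `ν`, terminals `L` and parameters,
given already-computed values `vals` for the nonterminals.  A node labelled with
a nonterminal `B` is replaced by `vals B`, with the parameters of `vals B`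
substituted by the expansions of the children of the node. -/
def expandPat {ν : Type} {L : Type u} (vals : ν → RTree (L ⊕ ℕ)) :
    RTree ((ν ⊕ L) ⊕ ℕ) → RTree (L ⊕ ℕ)
  | .node (Sum.inr i) _ => RTree.param i
  | .node (Sum.inl (Sum.inr f)) ts =>
      .node (Sum.inl f) (ts.attach.map (fun x => expandPat vals x.1))
  | .node (Sum.inl (Sum.inl B)) ts =>
      RTree.subst
        (fun i => (ts.attach.map (fun x => expandPat vals x.1)).getD i (RTree.param 0))
        (vals B)
termination_by t => sizeOf t
decreasing_by all_goals (simp_wf; have := List.sizeOf_lt_of_mem x.2; omega)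

/-- A tree straight-line program (TSLP) over the ranked terminal alphabet
`(L, rkL)`.  Nonterminals are `Fin N`, each of a given rank; parameters are
numbered starting from `0`; for every nonterminal there is exactly one rule,
whose right-hand side is a well-formed valid pattern (every parameter
`0, …, rank − 1` occurs exactly once, in left-to-right order), and the
"occurs in the right-hand side of" relation between nonterminals is acyclic. -/
structure TSLP (L : Type u) (rkL : L → ℕ) where
  N : ℕ
  rkN : Fin N → ℕ
  start : Fin N
  start_rank : rkN start = 0
  rhs : Fin N → RTree ((Fin N ⊕ L) ⊕ ℕ)
  rhs_wf : ∀ A, (rhs A).WF (fun l =>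
    match l with
    | Sum.inl (Sum.inl B) => rkN B
    | Sum.inl (Sum.inr f) => rkL f
    | Sum.inr _ => 0)
  rhs_valid : ∀ A, (rhs A).paramList = List.range (rkN A)
  acyclic : ∃ ord : Fin N → ℕ,
    ∀ A B, (Sum.inl (Sum.inl B)) ∈ (rhs A).labelsList → ord B < ord A

namespace TSLP

variable {L : Type u} {rkL : L → ℕ}

/-- Fuel-based evaluation of a nonterminal of a TSLP. -/
def valFuel (G : TSLP L rkL) : ℕ → Fin G.N → RTree (L ⊕ ℕ)
  | 0, _ => RTree.param 0
  | fuel+1, A => expandPat (G.valFuel fuel) (G.rhs A)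

/-- The valid pattern derived from nonterminal `A`.  By acyclicity, any chain of
nested nonterminal occurrences has length at most `G.N`, so fuel `G.N`
fully expands every nonterminal. -/
def valN (G : TSLP L rkL) (A : Fin G.N) : RTree (L ⊕ ℕ) := G.valFuel G.N A

/-- The tree derived from the start nonterminal. -/
def val (G : TSLP L rkL) : RTree (L ⊕ ℕ) := G.valN G.start

/-- The size of a TSLP: the total number of non-parameter nodes in all
right-hand sides. -/
def size (G : TSLP L rkL) : ℕ := ∑ A : Fin G.N, (G.rhs A).psize

/-- The list of nonterminals occurring in a pattern. -/
def ntList {ν : Type} {L' : Type u} (t : RTree ((ν ⊕ L') ⊕ ℕ)) : List ν :=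
  t.labelsList.filterMap (fun l =>
    match l with
    | Sum.inl (Sum.inl B) => some B
    | _ => none)

/-- Fuel-based depth of the derivation tree below a nonterminal: the children
of a node labelled `A` are the occurrences of nonterminals in the
right-hand side of `A`. -/
def ddepthFuel (G : TSLP L rkL) : ℕ → Fin G.N → ℕ
  | 0, _ => 0
  | fuel+1, A => ((ntList (G.rhs A)).map (fun B => G.ddepthFuel fuel B + 1)).foldr max 0

/-- The depth of the derivation tree of a TSLP. -/
def depth (G : TSLP L rkL) : ℕ := G.ddepthFuel G.N G.start

end TSLP

/-- The ranked alphabet `Σ_m`: two binary symbols `+` and `·`, and the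
rank-`0` symbols `0`, `1`, `y₁, …, y_m`. -/
inductive ArSym (m : ℕ) : Type
  | add | mul | zero | one | var (i : Fin m)

/-- The rank function of `Σ_m`. -/
def ArSym.rk {m : ℕ} : ArSym m → ℕ
  | .add => 2
  | .mul => 2
  | _ => 0

/-- A pattern node labelled with a nonterminal. -/
def ntNode {ν : Type} {L : Type} (B : ν) (ts : List (RTree ((ν ⊕ L) ⊕ ℕ))) :
    RTree ((ν ⊕ L) ⊕ ℕ) := .node (Sum.inl (Sum.inl B)) ts

/-- A pattern node labelled with a terminal. -/
def tmNode {ν : Type} {L : Type} (f : L) (ts : List (RTree ((ν ⊕ L) ⊕ ℕ))) :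
    RTree ((ν ⊕ L) ⊕ ℕ) := .node (Sum.inl (Sum.inr f)) ts

/-- The production of the nonterminal `A` has one of the forms `A → B(C)`;
`A(x) → B(C(x))`; `A → f(B,C)` with `f ∈ {+,·}`; `A(x) → f(x,B)` or
`A(x) → f(B,x)` with `f ∈ {+,·}`; `A → a` with `a ∈ {0, 1, y₁, …, y_m}`;
`A(x) → B(x)`; `A(x) → x`. -/
def GoodRule {m : ℕ} (H : TSLP (ArSym m) ArSym.rk) (A : Fin H.N) : Prop :=
  (∃ B C, H.rhs A = ntNode B [ntNode C []]) ∨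
  (∃ B C, H.rhs A = ntNode B [ntNode C [RTree.param 0]]) ∨
  (∃ f B C, (f = ArSym.add ∨ f = ArSym.mul) ∧
    H.rhs A = tmNode f [ntNode B [], ntNode C []]) ∨
  (∃ f B, (f = ArSym.add ∨ f = ArSym.mul) ∧
    (H.rhs A = tmNode f [RTree.param 0, ntNode B []] ∨
     H.rhs A = tmNode f [ntNode B [], RTree.param 0])) ∨
  (∃ a : ArSym m, (a = ArSym.zero ∨ a = ArSym.one ∨ ∃ i, a = ArSym.var i) ∧
    H.rhs A = tmNode a []) ∨
  (∃ B, H.rhs A = ntNode B [RTree.param 0]) ∨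
  (H.rhs A = RTree.param 0)

/-- Evaluation of a tree over `Σ_m` extended by parameters in a (not
necessarily commutative) semiring `S`, under a valuation `ν` of the variables
and a valuation `ρ` of the parameters.  (For ill-formed trees missing
arguments are given junk default values.) -/
def evalPar {m : ℕ} {S : Type} [AddCommMonoid S] [Monoid S]
    (ν : Fin m → S) (ρ : ℕ → S) : RTree (ArSym m ⊕ ℕ) → S
  | .node (Sum.inr i) _ => ρ i
  | .node (Sum.inl f) ts =>
    let es := ts.attach.map (fun x => evalPar ν ρ x.1)
    match f with
    | .add => es.getD 0 0 + es.getD 1 0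
    | .mul => es.getD 0 1 * es.getD 1 1
    | .zero => 0
    | .one => 1
    | .var i => ν i
termination_by t => sizeOf t
decreasing_by simp_wf; have := List.sizeOf_lt_of_mem x.2; omega

/-- Labels of leaf gates of an arithmetical circuit: `0`, `1`, or one of the
variables `y₁, …, y_m`. -/
inductive ALeaf (m : ℕ) : Type
  | zero | one | var (i : Fin m)

/-- An arithmetical circuit over `Σ_m`: a finite rooted directed acyclic graph
whose internal gates are labelled `+` (encoded `true`) or `·` (encoded
`false`) and have two ordered successors, and whose leaf gates are labelled
`0`, `1` or a variable `y_i`.  Its size is the number `size` of gates. -/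
structure Circuit (m : ℕ) where
  size : ℕ
  out : Fin size
  gate : Fin size → (Bool × Fin size × Fin size) ⊕ ALeaf m
  acyclic : ∃ ord : Fin size → ℕ,
    ∀ g b l r, gate g = Sum.inl (b, l, r) → ord l < ord g ∧ ord r < ord g

namespace Circuit

/-- Fuel-based evaluation of a gate in a (not necessarily commutative)
semiring. -/
def evalFuel {m : ℕ} {S : Type} [AddCommMonoid S] [Monoid S] (D : Circuit m)
    (ν : Fin m → S) : ℕ → Fin D.size → S
  | 0, _ => 0
  | fuel+1, g =>
    match D.gate g with
    | Sum.inl (b, l, r) =>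
        if b then D.evalFuel ν fuel l + D.evalFuel ν fuel r
        else D.evalFuel ν fuel l * D.evalFuel ν fuel r
    | Sum.inr .zero => 0
    | Sum.inr .one => 1
    | Sum.inr (.var i) => ν i

/-- The value of the circuit:  by acyclicity, any path in the circuit has
length less than `D.size`, so fuel `D.size` fully evaluates the output
gate. -/
def eval {m : ℕ} {S : Type} [AddCommMonoid S] [Monoid S] (D : Circuit m)
    (ν : Fin m → S) : S := D.evalFuel ν D.size D.out

/-- Fuel-based depth of a gate. -/
def depthFuel {m : ℕ} (D : Circuit m) : ℕ → Fin D.size → ℕ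
  | 0, _ => 0
  | fuel+1, g =>
    match D.gate g with
    | Sum.inl (_, l, r) => 1 + max (D.depthFuel fuel l) (D.depthFuel fuel r)
    | Sum.inr _ => 0

/-- The depth of the circuit: the length of a longest path from the output
gate to a leaf gate. -/
def depth {m : ℕ} (D : Circuit m) : ℕ := D.depthFuel D.size D.out

end Circuit

set_option maxHeartbeats 1000000

section Basics

theorem RTree.my_ind {L : Type u} {P : RTree L → Prop}
    (h : ∀ f ts, (∀ t ∈ ts, P t) → P (RTree.node f ts)) : ∀ t, P t
  | .node f ts => h f ts (fun t _ => RTree.my_ind h t)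
termination_by t => sizeOf t
decreasing_by rename_i ht; simp_wf; have := List.sizeOf_lt_of_mem ht; omega

theorem RTree.subst_node {L : Type u} (g : ℕ → RTree (L ⊕ ℕ)) (a : L) ts :
    RTree.subst g (.node (Sum.inl a) ts) = .node (Sum.inl a) (ts.map (RTree.subst g)) := by
  rw [RTree.subst]; simp

theorem RTree.subst_param {L : Type u} (g : ℕ → RTree (L ⊕ ℕ)) (i : ℕ) ts :
    RTree.subst g (.node (Sum.inr i) ts) = g i := by
  rw [RTree.subst]

theorem RTree.paramList_node {L : Type u} (a : L) ts :
    RTree.paramList (.node (Sum.inl a) ts) = (ts.map RTree.paramList).flatten := by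
  rw [RTree.paramList]; simp

theorem RTree.paramList_param {L : Type u} (i : ℕ) ts :
    RTree.paramList (L := L) (.node (Sum.inr i) ts) = [i] := by
  rw [RTree.paramList]

theorem RTree.labelsList_node {L : Type u} (a : L) ts :
    RTree.labelsList (.node a ts) = a :: (ts.map RTree.labelsList).flatten := by
  rw [RTree.labelsList]; simp

theorem RTree.psize_node {L : Type u} (a : L) ts :
    RTree.psize (.node (Sum.inl a) ts) = 1 + (ts.map RTree.psize).sum := by
  rw [RTree.psize]; simp

theorem RTree.psize_param {L : Type u} (i : ℕ) ts :
    RTree.psize (L := L) (.node (Sum.inr i) ts) = (ts.map RTree.psize).sum := by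
  rw [RTree.psize]; simp

theorem expandPat_nt {ν : Type} {L : Type u} (vals : ν → RTree (L ⊕ ℕ)) (B : ν) ts :
    expandPat vals (.node (Sum.inl (Sum.inl B)) ts) =
      RTree.subst (fun i => (ts.map (expandPat vals)).getD i (RTree.param 0)) (vals B) := by
  rw [expandPat]; simp

theorem expandPat_tm {ν : Type} {L : Type u} (vals : ν → RTree (L ⊕ ℕ)) (f : L) ts :
    expandPat vals (.node (Sum.inl (Sum.inr f)) ts) =
      .node (Sum.inl f) (ts.map (expandPat vals)) := by
  rw [expandPat]; simp

theorem expandPat_param {ν : Type} {L : Type u} (vals : ν → RTree (L ⊕ ℕ)) (i : ℕ) ts :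
    expandPat vals (.node (Sum.inr i) ts) = RTree.param i := by
  rw [expandPat]

theorem evalPar_param {m : ℕ} {S : Type} [AddCommMonoid S] [Monoid S]
    (ν : Fin m → S) (ρ : ℕ → S) (i : ℕ) ts :
    evalPar ν ρ (.node (Sum.inr i) ts) = ρ i := by
  rw [evalPar.eq_def]

theorem evalPar_node {m : ℕ} {S : Type} [AddCommMonoid S] [Monoid S]
    (ν : Fin m → S) (ρ : ℕ → S) (f : ArSym m) ts :
    evalPar ν ρ (.node (Sum.inl f) ts) =
      match f with
      | .add => (ts.map (evalPar ν ρ)).getD 0 0 + (ts.map (evalPar ν ρ)).getD 1 0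
      | .mul => (ts.map (evalPar ν ρ)).getD 0 1 * (ts.map (evalPar ν ρ)).getD 1 1
      | .zero => 0
      | .one => 1
      | .var i => ν i := by
  rw [evalPar.eq_def]; cases f <;> simp

theorem evalPar_subst {m : ℕ} {S : Type} [AddCommMonoid S] [Monoid S]
    (ν : Fin m → S) (ρ : ℕ → S) (g : ℕ → RTree (ArSym m ⊕ ℕ)) (t : RTree (ArSym m ⊕ ℕ)) :
    evalPar ν ρ (t.subst g) = evalPar ν (fun i => evalPar ν ρ (g i)) t := by
  induction t using RTree.my_ind with
  | h l ts ih =>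
    cases l with
    | inr i => rw [RTree.subst_param, evalPar_param]
    | inl a =>
      rw [RTree.subst_node, evalPar_node, evalPar_node]
      have hl : (ts.map (RTree.subst g)).map (evalPar ν ρ) =
          ts.map (evalPar ν (fun i => evalPar ν ρ (g i))) := by
        rw [List.map_map]
        exact List.map_congr_left (fun t ht => ih t ht)
      rw [hl]
end Basics

section Shapes

inductive Shape (m N : ℕ) : Type where
  | comp0 (B C : Fin N)
  | comp1 (B C : Fin N)
  | op0 (b : Bool) (B C : Fin N)
  | opL (b : Bool) (B : Fin N)
  | opR (b : Bool) (B : Fin N)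
  | leaf (a : ALeaf m)
  | copy (B : Fin N)
  | idx

def opSym {m : ℕ} (b : Bool) : ArSym m := if b then .add else .mul

def leafSym {m : ℕ} : ALeaf m → ArSym m
  | .zero => .zero
  | .one => .one
  | .var i => .var i

def shapeRhs {m N : ℕ} : Shape m N → RTree ((Fin N ⊕ ArSym m) ⊕ ℕ)
  | .comp0 B C => ntNode B [ntNode C []]
  | .comp1 B C => ntNode B [ntNode C [RTree.param 0]]
  | .op0 b B C => tmNode (opSym b) [ntNode B [], ntNode C []]
  | .opL b B => tmNode (opSym b) [RTree.param 0, ntNode B []]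
  | .opR b B => tmNode (opSym b) [ntNode B [], RTree.param 0]
  | .leaf a => tmNode (leafSym a) []
  | .copy B => ntNode B [RTree.param 0]
  | .idx => RTree.param 0

/-- The nonterminals referenced by a shape. -/
def Shape.refs {m N : ℕ} : Shape m N → List (Fin N)
  | .comp0 B C => [B, C]
  | .comp1 B C => [B, C]
  | .op0 _ B C => [B, C]
  | .opL _ B => [B]
  | .opR _ B => [B]
  | .leaf _ => []
  | .copy B => [B]
  | .idx => []

theorem exists_shape {m : ℕ} (H : TSLP (ArSym m) ArSym.rk) (A : Fin H.N)
    (h : GoodRule H A) : ∃ s : Shape m H.N, H.rhs A = shapeRhs s := by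
  rcases h with ⟨B, C, h⟩ | ⟨B, C, h⟩ | ⟨f, B, C, hf, h⟩ | ⟨f, B, hf, h | h⟩ |
    ⟨a, ha, h⟩ | ⟨B, h⟩ | h
  · exact ⟨.comp0 B C, h⟩
  · exact ⟨.comp1 B C, h⟩
  · rcases hf with rfl | rfl
    · exact ⟨.op0 true B C, h⟩
    · exact ⟨.op0 false B C, h⟩
  · rcases hf with rfl | rfl
    · exact ⟨.opL true B, h⟩
    · exact ⟨.opL false B, h⟩
  · rcases hf with rfl | rfl
    · exact ⟨.opR true B, h⟩
    · exact ⟨.opR false B, h⟩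
  · rcases ha with rfl | rfl | ⟨i, rfl⟩
    · exact ⟨.leaf .zero, h⟩
    · exact ⟨.leaf .one, h⟩
    · exact ⟨.leaf (.var i), h⟩
  · exact ⟨.copy B, h⟩
  · exact ⟨.idx, h⟩

theorem refs_mem_labels {m N : ℕ} (s : Shape m N) (B : Fin N) (h : B ∈ s.refs) :
    (Sum.inl (Sum.inl B) : (Fin N ⊕ ArSym m) ⊕ ℕ) ∈ (shapeRhs s).labelsList := by
  cases s <;> simp [Shape.refs] at h <;>
    first
    | (rcases h with rfl | rfl <;>
        simp [shapeRhs, ntNode, tmNode, RTree.param, RTree.labelsList_node])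
    | (subst h; simp [shapeRhs, ntNode, tmNode, RTree.param, RTree.labelsList_node])

/-- Whether a shape has a parameter (rank one). -/
def Shape.hasParam {m N : ℕ} : Shape m N → Bool
  | .comp0 _ _ => false
  | .op0 _ _ _ => false
  | .leaf _ => false
  | _ => true

theorem paramList_shape {m N : ℕ} (s : Shape m N) :
    (shapeRhs s).paramList = if s.hasParam then [0] else [] := by
  cases s <;> simp [shapeRhs, ntNode, tmNode, RTree.param, RTree.paramList_node,
    RTree.paramList_param, Shape.hasParam]

theorem ntList_shape {m N : ℕ} (s : Shape m N) :
    TSLP.ntList (shapeRhs s) = s.refs := by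
  cases s <;> simp [shapeRhs, ntNode, tmNode, RTree.param, TSLP.ntList,
    RTree.labelsList_node, Shape.refs]

theorem psize_shape_pos {m N : ℕ} (s : Shape m N) (h : s ≠ .idx) :
    1 ≤ (shapeRhs s).psize := by
  cases s <;> simp_all [shapeRhs, ntNode, tmNode, RTree.param, RTree.psize_node,
    RTree.psize_param]

end Shapes

noncomputable section Build

open Classical in
/-- choice of a shape for each rule -/
def shapeOf {m : ℕ} (H : TSLP (ArSym m) ArSym.rk) (hgood : ∀ A, GoodRule H A)
    (A : Fin H.N) : Shape m H.N := (exists_shape H A (hgood A)).choose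

theorem shapeOf_spec {m : ℕ} (H : TSLP (ArSym m) ArSym.rk) (hgood : ∀ A, GoodRule H A)
    (A : Fin H.N) : H.rhs A = shapeRhs (shapeOf H hgood A) :=
  (exists_shape H A (hgood A)).choose_spec

variable {m : ℕ} (H : TSLP (ArSym m) ArSym.rk) (hgood : ∀ A, GoodRule H A)

open Classical

/-- the set of nonterminals with a non-trivial rule -/
def nxs : Finset (Fin H.N) := Finset.univ.filter (fun A => shapeOf H hgood A ≠ .idx)

def K : ℕ := (nxs H hgood).card

def eIso : Fin (K H hgood) ≃o {x // x ∈ nxs H hgood} := (nxs H hgood).orderIsoOfFin rfl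

def sz : ℕ := 2 + 6 * K H hgood

def gOne : Fin (sz H hgood) := ⟨0, by unfold sz; omega⟩
def gZero : Fin (sz H hgood) := ⟨1, by unfold sz; omega⟩

def idxOf (A : Fin H.N) (h : A ∈ nxs H hgood) : ℕ :=
  ((eIso H hgood).symm ⟨A, h⟩ : Fin (K H hgood)).val

theorem idxOf_lt (A : Fin H.N) (h : A ∈ nxs H hgood) : idxOf H hgood A h < K H hgood :=
  Fin.isLt _

def blk (A : Fin H.N) (h : A ∈ nxs H hgood) (off : ℕ) (hoff : off < 6) :
    Fin (sz H hgood) :=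
  ⟨2 + 6 * idxOf H hgood A h + off, by
    have := idxOf_lt H hgood A h; unfold sz; omega⟩

/-- total version of `blk` -/
def blkT (A : Fin H.N) (off : ℕ) : Fin (sz H hgood) :=
  if h : A ∈ nxs H hgood ∧ off < 6 then blk H hgood A h.1 off h.2 else gZero H hgood

theorem blkT_eq (A : Fin H.N) (h : A ∈ nxs H hgood) (off : ℕ) (hoff : off < 6) :
    blkT H hgood A off = blk H hgood A h off hoff := dif_pos ⟨h, hoff⟩

def aOf (A : Fin H.N) : Fin (sz H hgood) :=
  if h : A ∈ nxs H hgood then blk H hgood A h 0 (by omega) else gOne H hgood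

def bOf (A : Fin H.N) : Fin (sz H hgood) :=
  if h : A ∈ nxs H hgood then blk H hgood A h 1 (by omega) else gOne H hgood

def cOf (A : Fin H.N) : Fin (sz H hgood) :=
  if h : A ∈ nxs H hgood then blk H hgood A h 2 (by omega) else gZero H hgood

/-- gate contents of the six gates of the block of a nonterminal -/
def spec (A : Fin H.N) :
    ℕ → (Bool × Fin (sz H hgood) × Fin (sz H hgood)) ⊕ ALeaf m :=
  match shapeOf H hgood A with
  | .comp0 B C => fun off =>
      match off with
      | 2 => .inl (true, blkT H hgood A 4, cOf H hgood B)
      | 3 => .inl (false, aOf H hgood B, cOf H hgood C)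
      | 4 => .inl (false, blkT H hgood A 3, bOf H hgood B)
      | _ => .inr .zero
  | .comp1 B C => fun off =>
      match off with
      | 0 => .inl (false, aOf H hgood B, aOf H hgood C)
      | 1 => .inl (false, bOf H hgood C, bOf H hgood B)
      | 2 => .inl (true, blkT H hgood A 4, cOf H hgood B)
      | 3 => .inl (false, aOf H hgood B, cOf H hgood C)
      | 4 => .inl (false, blkT H hgood A 3, bOf H hgood B)
      | _ => .inr .zero
  | .op0 b B C => fun off =>
      match off with
      | 2 => .inl (b, cOf H hgood B, cOf H hgood C)
      | _ => .inr .zero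
  | .opL b B => fun off =>
      if b then
        match off with
        | 0 => .inr .one
        | 1 => .inr .one
        | 2 => .inl (true, cOf H hgood B, gZero H hgood)
        | _ => .inr .zero
      else
        match off with
        | 0 => .inr .one
        | 1 => .inl (true, cOf H hgood B, gZero H hgood)
        | _ => .inr .zero
  | .opR b B => fun off =>
      if b then
        match off with
        | 0 => .inr .one
        | 1 => .inr .one
        | 2 => .inl (true, cOf H hgood B, gZero H hgood)
        | _ => .inr .zero
      else
        match off with
        | 0 => .inl (true, cOf H hgood B, gZero H hgood)
        | 1 => .inr .one
        | _ => .inr .zero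
  | .leaf a => fun off =>
      match off with
      | 2 => .inr a
      | _ => .inr .zero
  | .copy B => fun off =>
      match off with
      | 0 => .inl (true, aOf H hgood B, gZero H hgood)
      | 1 => .inl (true, bOf H hgood B, gZero H hgood)
      | 2 => .inl (true, cOf H hgood B, gZero H hgood)
      | _ => .inr .zero
  | .idx => fun _ => .inr .zero

def gateAt (i off : ℕ) : (Bool × Fin (sz H hgood) × Fin (sz H hgood)) ⊕ ALeaf m :=
  if hi : i < K H hgood then spec H hgood ((eIso H hgood) ⟨i, hi⟩).1 off
  else .inr .zero

def gateF (g : Fin (sz H hgood)) : (Bool × Fin (sz H hgood) × Fin (sz H hgood)) ⊕ ALeaf m :=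
  if g.val < 2 then (if g.val = 0 then .inr .one else .inr .zero)
  else gateAt H hgood ((g.val - 2) / 6) ((g.val - 2) % 6)

theorem gate_blk (A : Fin H.N) (h : A ∈ nxs H hgood) (off : ℕ) (hoff : off < 6) :
    gateF H hgood (blk H hgood A h off hoff) = spec H hgood A off := by
  have hvi : (blk H hgood A h off hoff).val = 2 + 6 * idxOf H hgood A h + off := rfl
  rw [gateF, hvi, if_neg (by omega)]
  have h1 : (2 + 6 * idxOf H hgood A h + off - 2) / 6 = idxOf H hgood A h := by omega
  have h2 : (2 + 6 * idxOf H hgood A h + off - 2) % 6 = off := by omega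
  rw [h1, h2, gateAt, dif_pos (idxOf_lt H hgood A h)]
  have h4 : (eIso H hgood) ⟨idxOf H hgood A h, idxOf_lt H hgood A h⟩ = ⟨A, h⟩ := by
    have h3 : (⟨idxOf H hgood A h, idxOf_lt H hgood A h⟩ : Fin (K H hgood)) =
        (eIso H hgood).symm ⟨A, h⟩ := Fin.ext rfl
    rw [h3, OrderIso.apply_symm_apply]
  exact congrArg (fun x : {y // y ∈ nxs H hgood} => spec H hgood x.1 off) h4

end Build

noncomputable section Build2

variable {m : ℕ} (H : TSLP (ArSym m) ArSym.rk) (hgood : ∀ A, GoodRule H A)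

open Classical

def ordW : Fin H.N → ℕ := H.acyclic.choose

theorem ordW_spec (A B : Fin H.N)
    (h : (Sum.inl (Sum.inl B) : (Fin H.N ⊕ ArSym m) ⊕ ℕ) ∈ (H.rhs A).labelsList) :
    ordW H B < ordW H A := H.acyclic.choose_spec A B h

theorem ref_ordW (A B : Fin H.N) (h : B ∈ (shapeOf H hgood A).refs) :
    ordW H B < ordW H A :=
  ordW_spec H A B (by rw [shapeOf_spec H hgood]; exact refs_mem_labels _ _ h)

def rnkOf (A : Fin H.N) : ℕ := ((nxs H hgood).filter (fun B => ordW H B < ordW H A)).card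

theorem rnk_lt (A B : Fin H.N) (hB : B ∈ nxs H hgood) (h : ordW H B < ordW H A) :
    rnkOf H hgood B < rnkOf H hgood A := by
  apply Finset.card_lt_card
  constructor
  · intro x hx
    simp only [Finset.mem_filter] at *
    exact ⟨hx.1, hx.2.trans h⟩
  · intro hsub
    have hBA : B ∈ (nxs H hgood).filter (fun C => ordW H C < ordW H A) := by
      simp only [Finset.mem_filter]; exact ⟨hB, h⟩
    have := hsub hBA
    simp only [Finset.mem_filter] at this
    omega

theorem rnk_lt_K (A : Fin H.N) (h : A ∈ nxs H hgood) :
    rnkOf H hgood A < K H hgood := by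
  apply Finset.card_lt_card
  constructor
  · exact Finset.filter_subset _ _
  · intro hsub
    have := hsub h
    simp only [Finset.mem_filter] at this
    omega

def wt : ℕ → ℕ
  | 0 => 2
  | 1 => 2
  | 2 => 3
  | 3 => 1
  | 4 => 2
  | _ => 0

theorem wt_le (off : ℕ) : wt off ≤ 3 := by
  unfold wt; split <;> omega

def ordAt (i off : ℕ) : ℕ :=
  if hi : i < K H hgood then 4 * rnkOf H hgood ((eIso H hgood) ⟨i, hi⟩).1 + wt off + 1 else 0

def ordG (g : Fin (sz H hgood)) : ℕ :=
  if g.val < 2 then 0 else ordAt H hgood ((g.val - 2) / 6) ((g.val - 2) % 6)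

theorem ordG_gZero : ordG H hgood (gZero H hgood) = 0 := by
  simp [ordG, gZero]

theorem ordG_gOne : ordG H hgood (gOne H hgood) = 0 := by
  simp [ordG, gOne]

theorem ord_blk (A : Fin H.N) (h : A ∈ nxs H hgood) (off : ℕ) (hoff : off < 6) :
    ordG H hgood (blk H hgood A h off hoff) = 4 * rnkOf H hgood A + wt off + 1 := by
  have hvi : (blk H hgood A h off hoff).val = 2 + 6 * idxOf H hgood A h + off := rfl
  rw [ordG, hvi, if_neg (by omega)]
  have h1 : (2 + 6 * idxOf H hgood A h + off - 2) / 6 = idxOf H hgood A h := by omega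
  have h2 : (2 + 6 * idxOf H hgood A h + off - 2) % 6 = off := by omega
  rw [h1, h2, ordAt, dif_pos (idxOf_lt H hgood A h)]
  have h4 : (eIso H hgood) ⟨idxOf H hgood A h, idxOf_lt H hgood A h⟩ = ⟨A, h⟩ := by
    have h3 : (⟨idxOf H hgood A h, idxOf_lt H hgood A h⟩ : Fin (K H hgood)) =
        (eIso H hgood).symm ⟨A, h⟩ := Fin.ext rfl
    rw [h3, OrderIso.apply_symm_apply]
  exact congrArg (fun x : {y // y ∈ nxs H hgood} => 4 * rnkOf H hgood x.1 + wt off + 1) h4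

theorem ordG_le (g : Fin (sz H hgood)) : ordG H hgood g ≤ 4 * K H hgood := by
  rw [ordG]
  split
  · omega
  · rw [ordAt]
    split
    · rename_i hi
      have h1 := rnk_lt_K H hgood ((eIso H hgood) ⟨_, hi⟩).1 ((eIso H hgood) ⟨_, hi⟩).2
      have h2 := wt_le ((g.val - 2) % 6)
      omega
    · omega

theorem ord_cross (A : Fin H.N) (B : Fin H.N) (hB : B ∈ (shapeOf H hgood A).refs)
    (hA : A ∈ nxs H hgood) :
    ordG H hgood (aOf H hgood B) ≤ 4 * rnkOf H hgood A ∧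
    ordG H hgood (bOf H hgood B) ≤ 4 * rnkOf H hgood A ∧
    ordG H hgood (cOf H hgood B) ≤ 4 * rnkOf H hgood A := by
  have hord := ref_ordW H hgood A B hB
  rw [aOf, bOf, cOf]
  by_cases hBn : B ∈ nxs H hgood
  · have hlt := rnk_lt H hgood A B hBn hord
    rw [dif_pos hBn, dif_pos hBn, dif_pos hBn, ord_blk, ord_blk, ord_blk]
    refine ⟨?_, ?_, ?_⟩ <;> (simp only [wt]; omega)
  · rw [dif_neg hBn, dif_neg hBn, dif_neg hBn, ordG_gZero, ordG_gOne]
    omega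

theorem ord_blkT (A : Fin H.N) (h : A ∈ nxs H hgood) (off : ℕ) (hoff : off < 6) :
    ordG H hgood (blkT H hgood A off) = 4 * rnkOf H hgood A + wt off + 1 := by
  rw [blkT_eq H hgood A h off hoff, ord_blk]

theorem acyc : ∀ g b l r, gateF H hgood g = .inl (b, l, r) →
    ordG H hgood l < ordG H hgood g ∧ ordG H hgood r < ordG H hgood g := by
  intro g b l r h
  rw [gateF] at h
  split at h
  · split at h <;> exact absurd h (by simp)
  · rename_i hg2
    rw [gateAt] at h
    split at h
    swap
    · exact absurd h (by simp)
    rename_i hi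
    have hAmem0 := ((eIso H hgood) ⟨(g.val - 2) / 6, hi⟩).2
    generalize hq : ((eIso H hgood) ⟨(g.val - 2) / 6, hi⟩ : {x // x ∈ nxs H hgood}).val = A at h hAmem0
    have hAmem : A ∈ nxs H hgood := hAmem0
    have hordg : ordG H hgood g = 4 * rnkOf H hgood A + wt ((g.val - 2) % 6) + 1 := by
      rw [ordG, if_neg hg2, ordAt, dif_pos hi, hq]
    rw [hordg]
    have hoff6 : (g.val - 2) % 6 < 6 := by omega
    unfold spec at h
    cases hs : shapeOf H hgood A <;> rw [hs] at h
    case comp0 B C =>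
      obtain ⟨hB1, hB2, hB3⟩ := ord_cross H hgood A B (by simp [hs, Shape.refs]) hAmem
      obtain ⟨hC1, hC2, hC3⟩ := ord_cross H hgood A C (by simp [hs, Shape.refs]) hAmem
      rcases (show (g.val - 2) % 6 = 0 ∨ (g.val - 2) % 6 = 1 ∨ (g.val - 2) % 6 = 2 ∨
          (g.val - 2) % 6 = 3 ∨ (g.val - 2) % 6 = 4 ∨ (g.val - 2) % 6 = 5 by omega) with
        h0 | h0 | h0 | h0 | h0 | h0 <;> rw [h0] at h ⊢ <;> simp at h <;>
        obtain ⟨-, hl, hr⟩ := h <;> subst hl <;> subst hr <;>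
        constructor <;>
        first
          | (rw [ordG_gZero]; simp only [wt]; omega)
          | (rw [ord_blkT H hgood A hAmem _ (by omega)]; simp only [wt]; omega)
          | (simp only [wt]; omega)
    case comp1 B C =>
      obtain ⟨hB1, hB2, hB3⟩ := ord_cross H hgood A B (by simp [hs, Shape.refs]) hAmem
      obtain ⟨hC1, hC2, hC3⟩ := ord_cross H hgood A C (by simp [hs, Shape.refs]) hAmem
      rcases (show (g.val - 2) % 6 = 0 ∨ (g.val - 2) % 6 = 1 ∨ (g.val - 2) % 6 = 2 ∨
          (g.val - 2) % 6 = 3 ∨ (g.val - 2) % 6 = 4 ∨ (g.val - 2) % 6 = 5 by omega) with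
        h0 | h0 | h0 | h0 | h0 | h0 <;> rw [h0] at h ⊢ <;> simp at h <;>
        obtain ⟨-, hl, hr⟩ := h <;> subst hl <;> subst hr <;>
        constructor <;>
        first
          | (rw [ordG_gZero]; simp only [wt]; omega)
          | (rw [ord_blkT H hgood A hAmem _ (by omega)]; simp only [wt]; omega)
          | (simp only [wt]; omega)
    case op0 bb B C =>
      obtain ⟨hB1, hB2, hB3⟩ := ord_cross H hgood A B (by simp [hs, Shape.refs]) hAmem
      obtain ⟨hC1, hC2, hC3⟩ := ord_cross H hgood A C (by simp [hs, Shape.refs]) hAmem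
      rcases (show (g.val - 2) % 6 = 0 ∨ (g.val - 2) % 6 = 1 ∨ (g.val - 2) % 6 = 2 ∨
          (g.val - 2) % 6 = 3 ∨ (g.val - 2) % 6 = 4 ∨ (g.val - 2) % 6 = 5 by omega) with
        h0 | h0 | h0 | h0 | h0 | h0 <;> rw [h0] at h ⊢ <;> simp at h <;>
        obtain ⟨-, hl, hr⟩ := h <;> subst hl <;> subst hr <;>
        constructor <;>
        first
          | (rw [ordG_gZero]; simp only [wt]; omega)
          | (rw [ord_blkT H hgood A hAmem _ (by omega)]; simp only [wt]; omega)
          | (simp only [wt]; omega)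
    case opL bb B =>
      obtain ⟨hB1, hB2, hB3⟩ := ord_cross H hgood A B (by simp [hs, Shape.refs]) hAmem
      cases bb <;>
      rcases (show (g.val - 2) % 6 = 0 ∨ (g.val - 2) % 6 = 1 ∨ (g.val - 2) % 6 = 2 ∨
          (g.val - 2) % 6 = 3 ∨ (g.val - 2) % 6 = 4 ∨ (g.val - 2) % 6 = 5 by omega) with
        h0 | h0 | h0 | h0 | h0 | h0 <;> rw [h0] at h ⊢ <;> simp at h <;>
        obtain ⟨-, hl, hr⟩ := h <;> subst hl <;> subst hr <;>
        constructor <;>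
        first
          | (rw [ordG_gZero]; simp only [wt]; omega)
          | (rw [ord_blkT H hgood A hAmem _ (by omega)]; simp only [wt]; omega)
          | (simp only [wt]; omega)
    case opR bb B =>
      obtain ⟨hB1, hB2, hB3⟩ := ord_cross H hgood A B (by simp [hs, Shape.refs]) hAmem
      cases bb <;>
      rcases (show (g.val - 2) % 6 = 0 ∨ (g.val - 2) % 6 = 1 ∨ (g.val - 2) % 6 = 2 ∨
          (g.val - 2) % 6 = 3 ∨ (g.val - 2) % 6 = 4 ∨ (g.val - 2) % 6 = 5 by omega) with
        h0 | h0 | h0 | h0 | h0 | h0 <;> rw [h0] at h ⊢ <;> simp at h <;>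
        obtain ⟨-, hl, hr⟩ := h <;> subst hl <;> subst hr <;>
        constructor <;>
        first
          | (rw [ordG_gZero]; simp only [wt]; omega)
          | (rw [ord_blkT H hgood A hAmem _ (by omega)]; simp only [wt]; omega)
          | (simp only [wt]; omega)
    case leaf a =>
      rcases (show (g.val - 2) % 6 = 0 ∨ (g.val - 2) % 6 = 1 ∨ (g.val - 2) % 6 = 2 ∨
          (g.val - 2) % 6 = 3 ∨ (g.val - 2) % 6 = 4 ∨ (g.val - 2) % 6 = 5 by omega) with
        h0 | h0 | h0 | h0 | h0 | h0 <;> rw [h0] at h ⊢ <;> simp at h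
    case copy B =>
      obtain ⟨hB1, hB2, hB3⟩ := ord_cross H hgood A B (by simp [hs, Shape.refs]) hAmem
      rcases (show (g.val - 2) % 6 = 0 ∨ (g.val - 2) % 6 = 1 ∨ (g.val - 2) % 6 = 2 ∨
          (g.val - 2) % 6 = 3 ∨ (g.val - 2) % 6 = 4 ∨ (g.val - 2) % 6 = 5 by omega) with
        h0 | h0 | h0 | h0 | h0 | h0 <;> rw [h0] at h ⊢ <;> simp at h <;>
        obtain ⟨-, hl, hr⟩ := h <;> subst hl <;> subst hr <;>
        constructor <;>
        first
          | (rw [ordG_gZero]; simp only [wt]; omega)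
          | (rw [ord_blkT H hgood A hAmem _ (by omega)]; simp only [wt]; omega)
          | (simp only [wt]; omega)
    case idx =>
      exact absurd h (by simp)

end Build2

section Stab

theorem Circuit.evalFuel_stab {m : ℕ} (D : Circuit m) (ord : Fin D.size → ℕ)
    (hord : ∀ g b l r, D.gate g = .inl (b, l, r) → ord l < ord g ∧ ord r < ord g)
    {S : Type} [AddCommMonoid S] [Monoid S] (ν : Fin m → S) :
    ∀ k g, ord g < k → ∀ f₁ f₂, k ≤ f₁ → k ≤ f₂ →
      D.evalFuel ν f₁ g = D.evalFuel ν f₂ g := by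
  intro k
  induction k with
  | zero => omega
  | succ k ih =>
    intro g hg f₁ f₂ h1 h2
    obtain ⟨a, rfl⟩ : ∃ a, f₁ = a + 1 := ⟨f₁ - 1, by omega⟩
    obtain ⟨c, rfl⟩ : ∃ c, f₂ = c + 1 := ⟨f₂ - 1, by omega⟩
    rw [Circuit.evalFuel, Circuit.evalFuel]
    cases hgate : D.gate g with
    | inl t =>
      obtain ⟨b, l, r⟩ := t
      obtain ⟨hl, hr⟩ := hord g b l r hgate
      show (if b then D.evalFuel ν a l + D.evalFuel ν a r
            else D.evalFuel ν a l * D.evalFuel ν a r) =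
          (if b then D.evalFuel ν c l + D.evalFuel ν c r
            else D.evalFuel ν c l * D.evalFuel ν c r)
      rw [ih l (by omega) a c (by omega) (by omega), ih r (by omega) a c (by omega) (by omega)]
    | inr lf =>
      cases lf <;> rfl

theorem Circuit.depthFuel_stab {m : ℕ} (D : Circuit m) (ord : Fin D.size → ℕ)
    (hord : ∀ g b l r, D.gate g = .inl (b, l, r) → ord l < ord g ∧ ord r < ord g) :
    ∀ k g, ord g < k → ∀ f₁ f₂, k ≤ f₁ → k ≤ f₂ →
      D.depthFuel f₁ g = D.depthFuel f₂ g := by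
  intro k
  induction k with
  | zero => omega
  | succ k ih =>
    intro g hg f₁ f₂ h1 h2
    obtain ⟨a, rfl⟩ : ∃ a, f₁ = a + 1 := ⟨f₁ - 1, by omega⟩
    obtain ⟨c, rfl⟩ : ∃ c, f₂ = c + 1 := ⟨f₂ - 1, by omega⟩
    rw [Circuit.depthFuel, Circuit.depthFuel]
    cases hgate : D.gate g with
    | inl t =>
      obtain ⟨b, l, r⟩ := t
      obtain ⟨hl, hr⟩ := hord g b l r hgate
      show 1 + max (D.depthFuel a l) (D.depthFuel a r) =
          1 + max (D.depthFuel c l) (D.depthFuel c r)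
      rw [ih l (by omega) a c (by omega) (by omega), ih r (by omega) a c (by omega) (by omega)]
    | inr lf =>
      rfl

end Stab

noncomputable section Build3

variable {m : ℕ} (H : TSLP (ArSym m) ArSym.rk) (hgood : ∀ A, GoodRule H A)

open Classical

def circ : Circuit m :=
  ⟨sz H hgood, cOf H hgood H.start, gateF H hgood, ⟨ordG H hgood, acyc H hgood⟩⟩

def EvF {S : Type} [AddCommMonoid S] [Monoid S] (ν : Fin m → S) (g : Fin (sz H hgood)) : S :=
  (circ H hgood).evalFuel ν (sz H hgood) g

def DpF (g : Fin (sz H hgood)) : ℕ := (circ H hgood).depthFuel (sz H hgood) g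

variable {S : Type} [AddCommMonoid S] [Monoid S] (ν : Fin m → S)

theorem Ev_gate (g b l r) (h : gateF H hgood g = .inl (b, l, r)) :
    EvF H hgood ν g = if b then EvF H hgood ν l + EvF H hgood ν r
      else EvF H hgood ν l * EvF H hgood ν r := by
  have hs' : sz H hgood = 6 * K H hgood + 1 + 1 := by unfold sz; omega
  have stab := Circuit.evalFuel_stab (circ H hgood) (ordG H hgood) (acyc H hgood) ν
    (4 * K H hgood + 1)
  have h4 : ∀ x : Fin (sz H hgood), ordG H hgood x < 4 * K H hgood + 1 := fun x =>
    lt_of_le_of_lt (ordG_le H hgood x) (by omega)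
  have hg : (circ H hgood).gate g = .inl (b, l, r) := h
  have key : (circ H hgood).evalFuel ν (6 * K H hgood + 1 + 1) g =
      if b then (circ H hgood).evalFuel ν (6 * K H hgood + 1) l +
        (circ H hgood).evalFuel ν (6 * K H hgood + 1) r
      else (circ H hgood).evalFuel ν (6 * K H hgood + 1) l *
        (circ H hgood).evalFuel ν (6 * K H hgood + 1) r := by
    rw [Circuit.evalFuel.eq_2 (circ H hgood) ν g (6 * K H hgood + 1), hg]
  have e1 : (circ H hgood).evalFuel ν (sz H hgood) g =
      (circ H hgood).evalFuel ν (6 * K H hgood + 1 + 1) g := by rw [hs']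
  unfold EvF
  rw [e1, key,
    stab l (h4 l) (6 * K H hgood + 1) (sz H hgood) (by omega) (by unfold sz; omega),
    stab r (h4 r) (6 * K H hgood + 1) (sz H hgood) (by omega) (by unfold sz; omega)]

theorem Ev_leaf (g a) (h : gateF H hgood g = .inr a) :
    EvF H hgood ν g = (match a with
      | ALeaf.zero => (0 : S)
      | ALeaf.one => 1
      | ALeaf.var i => ν i) := by
  have hs' : sz H hgood = 6 * K H hgood + 1 + 1 := by unfold sz; omega
  have hg : (circ H hgood).gate g = .inr a := h
  have e1 : (circ H hgood).evalFuel ν (sz H hgood) g =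
      (circ H hgood).evalFuel ν (6 * K H hgood + 1 + 1) g := by rw [hs']
  unfold EvF
  rw [e1, Circuit.evalFuel.eq_2 (circ H hgood) ν g (6 * K H hgood + 1), hg]
  cases a <;> rfl

theorem gate_gZero : gateF H hgood (gZero H hgood) = .inr .zero := by
  simp [gateF, gZero]

theorem gate_gOne : gateF H hgood (gOne H hgood) = .inr .one := by
  simp [gateF, gOne]

theorem Ev_gZero : EvF H hgood ν (gZero H hgood) = 0 :=
  Ev_leaf H hgood ν _ _ (gate_gZero H hgood)

theorem Ev_gOne : EvF H hgood ν (gOne H hgood) = 1 :=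
  Ev_leaf H hgood ν _ _ (gate_gOne H hgood)

theorem Dp_gate (g b l r) (h : gateF H hgood g = .inl (b, l, r)) :
    DpF H hgood g = 1 + max (DpF H hgood l) (DpF H hgood r) := by
  have hs' : sz H hgood = 6 * K H hgood + 1 + 1 := by unfold sz; omega
  have stab := Circuit.depthFuel_stab (circ H hgood) (ordG H hgood) (acyc H hgood)
    (4 * K H hgood + 1)
  have h4 : ∀ x : Fin (sz H hgood), ordG H hgood x < 4 * K H hgood + 1 := fun x =>
    lt_of_le_of_lt (ordG_le H hgood x) (by omega)
  have hg : (circ H hgood).gate g = .inl (b, l, r) := h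
  have key : (circ H hgood).depthFuel (6 * K H hgood + 1 + 1) g =
      1 + max ((circ H hgood).depthFuel (6 * K H hgood + 1) l)
        ((circ H hgood).depthFuel (6 * K H hgood + 1) r) := by
    rw [Circuit.depthFuel.eq_2 (circ H hgood) g (6 * K H hgood + 1), hg]
  have e1 : (circ H hgood).depthFuel (sz H hgood) g =
      (circ H hgood).depthFuel (6 * K H hgood + 1 + 1) g := by rw [hs']
  unfold DpF
  rw [e1, key,
    stab l (h4 l) (6 * K H hgood + 1) (sz H hgood) (by omega) (by unfold sz; omega),
    stab r (h4 r) (6 * K H hgood + 1) (sz H hgood) (by omega) (by unfold sz; omega)]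

theorem Dp_leaf (g a) (h : gateF H hgood g = .inr a) : DpF H hgood g = 0 := by
  have hs' : sz H hgood = 6 * K H hgood + 1 + 1 := by unfold sz; omega
  have hg : (circ H hgood).gate g = .inr a := h
  have e1 : (circ H hgood).depthFuel (sz H hgood) g =
      (circ H hgood).depthFuel (6 * K H hgood + 1 + 1) g := by rw [hs']
  unfold DpF
  rw [e1, Circuit.depthFuel.eq_2 (circ H hgood) g (6 * K H hgood + 1), hg]

theorem Dp_gZero : DpF H hgood (gZero H hgood) = 0 :=
  Dp_leaf H hgood _ _ (gate_gZero H hgood)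

theorem Dp_gOne : DpF H hgood (gOne H hgood) = 0 :=
  Dp_leaf H hgood _ _ (gate_gOne H hgood)

def cnt (A : Fin H.N) : ℕ := (Finset.univ.filter (fun B => ordW H B < ordW H A)).card

theorem cnt_lt (A B : Fin H.N) (h : ordW H B < ordW H A) : cnt H B < cnt H A := by
  apply Finset.card_lt_card
  constructor
  · intro x hx
    simp only [Finset.mem_filter] at *
    exact ⟨hx.1, hx.2.trans h⟩
  · intro hsub
    have hBA : B ∈ Finset.univ.filter (fun C => ordW H C < ordW H A) := by
      simp only [Finset.mem_filter]; exact ⟨Finset.mem_univ _, h⟩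
    have := hsub hBA
    simp only [Finset.mem_filter] at this
    omega

theorem cnt_lt_N (A : Fin H.N) : cnt H A < H.N := by
  have h1 : cnt H A < (Finset.univ : Finset (Fin H.N)).card := by
    apply Finset.card_lt_card
    constructor
    · exact Finset.filter_subset _ _
    · intro hsub
      have := hsub (Finset.mem_univ A)
      simp only [Finset.mem_filter] at this
      omega
  have h2 : (Finset.univ : Finset (Fin H.N)).card = H.N := by simp
  omega

theorem rk_eq (A : Fin H.N) :
    H.rkN A = if (shapeOf H hgood A).hasParam then 1 else 0 := by
  have hv := H.rhs_valid A
  rw [shapeOf_spec H hgood A, paramList_shape] at hv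
  have hlen := congrArg List.length hv
  simp only [List.length_range, apply_ite List.length, List.length_cons,
    List.length_nil] at hlen
  split at hlen <;> split <;> simp_all

end Build3

section MoreBasics

theorem expandPat_paramP {ν : Type} {L : Type u} (vals : ν → RTree (L ⊕ ℕ)) (i : ℕ) :
    expandPat vals (RTree.param i) = RTree.param i := expandPat_param vals i []

theorem evalPar_paramP {m : ℕ} {S : Type} [AddCommMonoid S] [Monoid S]
    (ν : Fin m → S) (ρ : ℕ → S) (i : ℕ) :
    evalPar ν ρ (RTree.param i) = ρ i := evalPar_param ν ρ i []

theorem evalPar_add {m : ℕ} {S : Type} [AddCommMonoid S] [Monoid S]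
    (ν : Fin m → S) (ρ : ℕ → S) (ts) :
    evalPar ν ρ (.node (Sum.inl ArSym.add) ts) =
      (ts.map (evalPar ν ρ)).getD 0 0 + (ts.map (evalPar ν ρ)).getD 1 0 := by
  rw [evalPar_node]

theorem evalPar_mul {m : ℕ} {S : Type} [AddCommMonoid S] [Monoid S]
    (ν : Fin m → S) (ρ : ℕ → S) (ts) :
    evalPar ν ρ (.node (Sum.inl ArSym.mul) ts) =
      (ts.map (evalPar ν ρ)).getD 0 1 * (ts.map (evalPar ν ρ)).getD 1 1 := by
  rw [evalPar_node]

theorem evalPar_zero {m : ℕ} {S : Type} [AddCommMonoid S] [Monoid S]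
    (ν : Fin m → S) (ρ : ℕ → S) (ts) :
    evalPar ν ρ (.node (Sum.inl ArSym.zero) ts) = 0 := by rw [evalPar_node]

theorem evalPar_one {m : ℕ} {S : Type} [AddCommMonoid S] [Monoid S]
    (ν : Fin m → S) (ρ : ℕ → S) (ts) :
    evalPar ν ρ (.node (Sum.inl ArSym.one) ts) = 1 := by rw [evalPar_node]

theorem evalPar_var {m : ℕ} {S : Type} [AddCommMonoid S] [Monoid S]
    (ν : Fin m → S) (ρ : ℕ → S) (i) (ts) :
    evalPar ν ρ (.node (Sum.inl (ArSym.var i)) ts) = ν i := by rw [evalPar_node]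

end MoreBasics

noncomputable section Build4

variable {m : ℕ} (H : TSLP (ArSym m) ArSym.rk) (hgood : ∀ A, GoodRule H A)

open Classical

theorem Ev_leafZero {S : Type} [AddCommMonoid S] [Monoid S] (ν : Fin m → S)
    (g) (h : gateF H hgood g = .inr .zero) : EvF H hgood ν g = 0 := by
  rw [Ev_leaf H hgood ν g _ h]

theorem Ev_leafOne {S : Type} [AddCommMonoid S] [Monoid S] (ν : Fin m → S)
    (g) (h : gateF H hgood g = .inr .one) : EvF H hgood ν g = 1 := by
  rw [Ev_leaf H hgood ν g _ h]

theorem Ev_leafVar {S : Type} [AddCommMonoid S] [Monoid S] (ν : Fin m → S)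
    (g i) (h : gateF H hgood g = .inr (.var i)) : EvF H hgood ν g = ν i := by
  rw [Ev_leaf H hgood ν g _ h]

theorem main_eval {S : Type} [AddCommMonoid S] [Monoid S]
    (hdl : ∀ a b c : S, a * (b + c) = a * b + a * c)
    (hdr : ∀ a b c : S, (a + b) * c = a * c + b * c)
    (ν : Fin m → S) :
    ∀ f A, cnt H A < f → ∀ ρ : ℕ → S,
      evalPar ν ρ (H.valFuel f A) =
        if H.rkN A = 0 then EvF H hgood ν (cOf H hgood A)
        else EvF H hgood ν (aOf H hgood A) * ρ 0 * EvF H hgood ν (bOf H hgood A) +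
          EvF H hgood ν (cOf H hgood A) := by
  intro f
  induction f with
  | zero => intro A h; omega
  | succ f ih =>
    intro A hA ρ
    rw [TSLP.valFuel, shapeOf_spec H hgood A]
    have hrkA := rk_eq H hgood A
    cases hs : shapeOf H hgood A
    case comp0 B C =>
      rw [hs] at hrkA; simp only [Shape.hasParam, Bool.false_eq_true, if_false] at hrkA
      have hAnx : A ∈ nxs H hgood := by simp [nxs, hs]
      have hcntB : cnt H B < f := by
        have h1 := cnt_lt H A B (ref_ordW H hgood A B (by simp [hs, Shape.refs]))
        omega
      have hcntC : cnt H C < f := by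
        have h1 := cnt_lt H A C (ref_ordW H hgood A C (by simp [hs, Shape.refs]))
        omega
      have hwf := H.rhs_wf A
      rw [shapeOf_spec H hgood A, hs] at hwf
      simp only [shapeRhs, ntNode] at hwf
      obtain ⟨hlenB, hallB⟩ : _ ∧ _ := by cases hwf with | node h1 h2 => exact ⟨h1, h2⟩
      have hrkB : H.rkN B = 1 := by simpa using hlenB.symm
      have hrkC : H.rkN C = 0 := by
        have hC := hallB (RTree.node (Sum.inl (Sum.inl C)) []) (by simp)
        cases hC with | node h1 _ => simpa using h1.symm
      simp only [shapeRhs, ntNode]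
      rw [expandPat_nt, evalPar_subst, ih B hcntB]
      rw [if_neg (by omega)]
      simp only [List.map_cons, List.map_nil, List.getD_cons_zero]
      rw [expandPat_nt, evalPar_subst, ih C hcntC, if_pos hrkC]
      rw [if_pos hrkA]
      have hc2 : cOf H hgood A = blk H hgood A hAnx 2 (by omega) := dif_pos hAnx
      have g2 : gateF H hgood (blk H hgood A hAnx 2 (by omega)) =
          .inl (true, blkT H hgood A 4, cOf H hgood B) := by
        rw [gate_blk]; unfold spec; rw [hs]; try rfl
      have g4 : gateF H hgood (blkT H hgood A 4) =
          .inl (false, blkT H hgood A 3, bOf H hgood B) := by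
        rw [blkT_eq H hgood A hAnx 4 (by omega), gate_blk]; unfold spec; rw [hs]; rfl
      have g3 : gateF H hgood (blkT H hgood A 3) =
          .inl (false, aOf H hgood B, cOf H hgood C) := by
        rw [blkT_eq H hgood A hAnx 3 (by omega), gate_blk]; unfold spec; rw [hs]; rfl
      rw [hc2, Ev_gate H hgood ν _ _ _ _ g2, Ev_gate H hgood ν _ _ _ _ g4,
        Ev_gate H hgood ν _ _ _ _ g3]
      simp only [if_true, Bool.false_eq_true, if_false]
    case comp1 B C =>
      rw [hs] at hrkA; simp only [Shape.hasParam, if_true] at hrkA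
      have hAnx : A ∈ nxs H hgood := by simp [nxs, hs]
      have hcntB : cnt H B < f := by
        have h1 := cnt_lt H A B (ref_ordW H hgood A B (by simp [hs, Shape.refs]))
        omega
      have hcntC : cnt H C < f := by
        have h1 := cnt_lt H A C (ref_ordW H hgood A C (by simp [hs, Shape.refs]))
        omega
      have hwf := H.rhs_wf A
      rw [shapeOf_spec H hgood A, hs] at hwf
      simp only [shapeRhs, ntNode] at hwf
      obtain ⟨hlenB, hallB⟩ : _ ∧ _ := by cases hwf with | node h1 h2 => exact ⟨h1, h2⟩
      have hrkB : H.rkN B = 1 := by simpa using hlenB.symm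
      have hrkC : H.rkN C = 1 := by
        have hC := hallB (RTree.node (Sum.inl (Sum.inl C)) [RTree.param 0]) (by simp)
        cases hC with | node h1 _ => simpa using h1.symm
      simp only [shapeRhs, ntNode]
      rw [expandPat_nt, evalPar_subst, ih B hcntB, if_neg (by omega)]
      simp only [List.map_cons, List.map_nil, List.getD_cons_zero]
      rw [expandPat_nt, evalPar_subst, ih C hcntC, if_neg (by omega)]
      simp only [List.map_cons, List.map_nil, List.getD_cons_zero, expandPat_paramP,
        evalPar_paramP]
      rw [if_neg (by omega)]
      have ha0 : aOf H hgood A = blk H hgood A hAnx 0 (by omega) := dif_pos hAnx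
      have hb1 : bOf H hgood A = blk H hgood A hAnx 1 (by omega) := dif_pos hAnx
      have hc2 : cOf H hgood A = blk H hgood A hAnx 2 (by omega) := dif_pos hAnx
      have g0 : gateF H hgood (blk H hgood A hAnx 0 (by omega)) =
          .inl (false, aOf H hgood B, aOf H hgood C) := by
        rw [gate_blk]; unfold spec; rw [hs]; try rfl
      have g1 : gateF H hgood (blk H hgood A hAnx 1 (by omega)) =
          .inl (false, bOf H hgood C, bOf H hgood B) := by
        rw [gate_blk]; unfold spec; rw [hs]; try rfl
      have g2 : gateF H hgood (blk H hgood A hAnx 2 (by omega)) =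
          .inl (true, blkT H hgood A 4, cOf H hgood B) := by
        rw [gate_blk]; unfold spec; rw [hs]; try rfl
      have g4 : gateF H hgood (blkT H hgood A 4) =
          .inl (false, blkT H hgood A 3, bOf H hgood B) := by
        rw [blkT_eq H hgood A hAnx 4 (by omega), gate_blk]; unfold spec; rw [hs]; rfl
      have g3 : gateF H hgood (blkT H hgood A 3) =
          .inl (false, aOf H hgood B, cOf H hgood C) := by
        rw [blkT_eq H hgood A hAnx 3 (by omega), gate_blk]; unfold spec; rw [hs]; rfl
      rw [ha0, hb1, hc2, Ev_gate H hgood ν _ _ _ _ g0, Ev_gate H hgood ν _ _ _ _ g1,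
        Ev_gate H hgood ν _ _ _ _ g2, Ev_gate H hgood ν _ _ _ _ g4,
        Ev_gate H hgood ν _ _ _ _ g3]
      simp only [if_true, Bool.false_eq_true, if_false]
      rw [hdl, hdr]
      simp only [mul_assoc, add_assoc]
    case op0 bb B C =>
      rw [hs] at hrkA; simp only [Shape.hasParam, Bool.false_eq_true, if_false] at hrkA
      have hAnx : A ∈ nxs H hgood := by simp [nxs, hs]
      have hcntB : cnt H B < f := by
        have h1 := cnt_lt H A B (ref_ordW H hgood A B (by simp [hs, Shape.refs]))
        omega
      have hcntC : cnt H C < f := by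
        have h1 := cnt_lt H A C (ref_ordW H hgood A C (by simp [hs, Shape.refs]))
        omega
      have hwf := H.rhs_wf A
      rw [shapeOf_spec H hgood A, hs] at hwf
      simp only [shapeRhs, ntNode, tmNode] at hwf
      obtain ⟨hlenB, hallB⟩ : _ ∧ _ := by cases hwf with | node h1 h2 => exact ⟨h1, h2⟩
      have hrkB : H.rkN B = 0 := by
        have hB := hallB (RTree.node (Sum.inl (Sum.inl B)) []) (by simp)
        cases hB with | node h1 _ => simpa using h1.symm
      have hrkC : H.rkN C = 0 := by
        have hC := hallB (RTree.node (Sum.inl (Sum.inl C)) []) (by simp)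
        cases hC with | node h1 _ => simpa using h1.symm
      have hc2 : cOf H hgood A = blk H hgood A hAnx 2 (by omega) := dif_pos hAnx
      have g2 : gateF H hgood (blk H hgood A hAnx 2 (by omega)) =
          .inl (bb, cOf H hgood B, cOf H hgood C) := by
        rw [gate_blk]; unfold spec; rw [hs]; try rfl
      rw [if_pos hrkA, hc2, Ev_gate H hgood ν _ _ _ _ g2]
      cases bb
      · simp only [shapeRhs, ntNode, tmNode, opSym, Bool.false_eq_true, if_false]
        rw [expandPat_tm, evalPar_mul]
        simp only [List.map_cons, List.map_nil, List.getD_cons_zero, List.getD_cons_succ]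
        rw [expandPat_nt, evalPar_subst, ih B hcntB, if_pos hrkB,
          expandPat_nt, evalPar_subst, ih C hcntC, if_pos hrkC]
      · simp only [shapeRhs, ntNode, tmNode, opSym, if_true]
        rw [expandPat_tm, evalPar_add]
        simp only [List.map_cons, List.map_nil, List.getD_cons_zero, List.getD_cons_succ]
        rw [expandPat_nt, evalPar_subst, ih B hcntB, if_pos hrkB,
          expandPat_nt, evalPar_subst, ih C hcntC, if_pos hrkC]
    case opL bb B =>
      rw [hs] at hrkA; simp only [Shape.hasParam, if_true] at hrkA
      have hAnx : A ∈ nxs H hgood := by simp [nxs, hs]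
      have hcntB : cnt H B < f := by
        have h1 := cnt_lt H A B (ref_ordW H hgood A B (by simp [hs, Shape.refs]))
        omega
      have hwf := H.rhs_wf A
      rw [shapeOf_spec H hgood A, hs] at hwf
      simp only [shapeRhs, ntNode, tmNode] at hwf
      obtain ⟨hlenB, hallB⟩ : _ ∧ _ := by cases hwf with | node h1 h2 => exact ⟨h1, h2⟩
      have hrkB : H.rkN B = 0 := by
        have hB := hallB (RTree.node (Sum.inl (Sum.inl B)) []) (by simp)
        cases hB with | node h1 _ => simpa using h1.symm
      rw [if_neg (by omega)]
      have ha0 : aOf H hgood A = blk H hgood A hAnx 0 (by omega) := dif_pos hAnx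
      have hb1 : bOf H hgood A = blk H hgood A hAnx 1 (by omega) := dif_pos hAnx
      have hc2 : cOf H hgood A = blk H hgood A hAnx 2 (by omega) := dif_pos hAnx
      cases bb
      · -- multiplication: A(x) → x · B
        have g0 : gateF H hgood (blk H hgood A hAnx 0 (by omega)) = .inr .one := by
          rw [gate_blk]; unfold spec; rw [hs]; try rfl
        have g1 : gateF H hgood (blk H hgood A hAnx 1 (by omega)) =
            .inl (true, cOf H hgood B, gZero H hgood) := by
          rw [gate_blk]; unfold spec; rw [hs]; try rfl
        have g2 : gateF H hgood (blk H hgood A hAnx 2 (by omega)) = .inr .zero := by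
          rw [gate_blk]; unfold spec; rw [hs]; try rfl
        rw [ha0, hb1, hc2, Ev_leafOne H hgood ν _ g0, Ev_gate H hgood ν _ _ _ _ g1,
          Ev_leafZero H hgood ν _ g2, Ev_gZero]
        simp only [shapeRhs, ntNode, tmNode, opSym, Bool.false_eq_true, if_false, if_true]
        rw [expandPat_tm, evalPar_mul]
        simp only [List.map_cons, List.map_nil, List.getD_cons_zero, List.getD_cons_succ,
          expandPat_paramP, evalPar_paramP]
        rw [expandPat_nt, evalPar_subst, ih B hcntB, if_pos hrkB]
        rw [one_mul, add_zero, add_zero]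
      · -- addition: A(x) → x + B
        have g0 : gateF H hgood (blk H hgood A hAnx 0 (by omega)) = .inr .one := by
          rw [gate_blk]; unfold spec; rw [hs]; try rfl
        have g1 : gateF H hgood (blk H hgood A hAnx 1 (by omega)) = .inr .one := by
          rw [gate_blk]; unfold spec; rw [hs]; try rfl
        have g2 : gateF H hgood (blk H hgood A hAnx 2 (by omega)) =
            .inl (true, cOf H hgood B, gZero H hgood) := by
          rw [gate_blk]; unfold spec; rw [hs]; try rfl
        rw [ha0, hb1, hc2, Ev_leafOne H hgood ν _ g0, Ev_leafOne H hgood ν _ g1,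
          Ev_gate H hgood ν _ _ _ _ g2, Ev_gZero]
        simp only [shapeRhs, ntNode, tmNode, opSym, if_true]
        rw [expandPat_tm, evalPar_add]
        simp only [List.map_cons, List.map_nil, List.getD_cons_zero, List.getD_cons_succ,
          expandPat_paramP, evalPar_paramP]
        rw [expandPat_nt, evalPar_subst, ih B hcntB, if_pos hrkB]
        rw [one_mul, mul_one, add_zero]
    case opR bb B =>
      rw [hs] at hrkA; simp only [Shape.hasParam, if_true] at hrkA
      have hAnx : A ∈ nxs H hgood := by simp [nxs, hs]
      have hcntB : cnt H B < f := by
        have h1 := cnt_lt H A B (ref_ordW H hgood A B (by simp [hs, Shape.refs]))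
        omega
      have hwf := H.rhs_wf A
      rw [shapeOf_spec H hgood A, hs] at hwf
      simp only [shapeRhs, ntNode, tmNode] at hwf
      obtain ⟨hlenB, hallB⟩ : _ ∧ _ := by cases hwf with | node h1 h2 => exact ⟨h1, h2⟩
      have hrkB : H.rkN B = 0 := by
        have hB := hallB (RTree.node (Sum.inl (Sum.inl B)) []) (by simp)
        cases hB with | node h1 _ => simpa using h1.symm
      rw [if_neg (by omega)]
      have ha0 : aOf H hgood A = blk H hgood A hAnx 0 (by omega) := dif_pos hAnx
      have hb1 : bOf H hgood A = blk H hgood A hAnx 1 (by omega) := dif_pos hAnx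
      have hc2 : cOf H hgood A = blk H hgood A hAnx 2 (by omega) := dif_pos hAnx
      cases bb
      · -- multiplication: A(x) → B · x
        have g0 : gateF H hgood (blk H hgood A hAnx 0 (by omega)) =
            .inl (true, cOf H hgood B, gZero H hgood) := by
          rw [gate_blk]; unfold spec; rw [hs]; try rfl
        have g1 : gateF H hgood (blk H hgood A hAnx 1 (by omega)) = .inr .one := by
          rw [gate_blk]; unfold spec; rw [hs]; try rfl
        have g2 : gateF H hgood (blk H hgood A hAnx 2 (by omega)) = .inr .zero := by
          rw [gate_blk]; unfold spec; rw [hs]; try rfl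
        rw [ha0, hb1, hc2, Ev_gate H hgood ν _ _ _ _ g0, Ev_leafOne H hgood ν _ g1,
          Ev_leafZero H hgood ν _ g2, Ev_gZero]
        simp only [shapeRhs, ntNode, tmNode, opSym, Bool.false_eq_true, if_false, if_true]
        rw [expandPat_tm, evalPar_mul]
        simp only [List.map_cons, List.map_nil, List.getD_cons_zero, List.getD_cons_succ,
          expandPat_paramP, evalPar_paramP]
        rw [expandPat_nt, evalPar_subst, ih B hcntB, if_pos hrkB]
        rw [add_zero, mul_one, add_zero]
      · -- addition: A(x) → B + x
        have g0 : gateF H hgood (blk H hgood A hAnx 0 (by omega)) = .inr .one := by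
          rw [gate_blk]; unfold spec; rw [hs]; try rfl
        have g1 : gateF H hgood (blk H hgood A hAnx 1 (by omega)) = .inr .one := by
          rw [gate_blk]; unfold spec; rw [hs]; try rfl
        have g2 : gateF H hgood (blk H hgood A hAnx 2 (by omega)) =
            .inl (true, cOf H hgood B, gZero H hgood) := by
          rw [gate_blk]; unfold spec; rw [hs]; try rfl
        rw [ha0, hb1, hc2, Ev_leafOne H hgood ν _ g0, Ev_leafOne H hgood ν _ g1,
          Ev_gate H hgood ν _ _ _ _ g2, Ev_gZero]
        simp only [shapeRhs, ntNode, tmNode, opSym, if_true]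
        rw [expandPat_tm, evalPar_add]
        simp only [List.map_cons, List.map_nil, List.getD_cons_zero, List.getD_cons_succ,
          expandPat_paramP, evalPar_paramP]
        rw [expandPat_nt, evalPar_subst, ih B hcntB, if_pos hrkB]
        rw [one_mul, mul_one, add_zero, add_comm]
    case leaf a =>
      rw [hs] at hrkA; simp only [Shape.hasParam, Bool.false_eq_true, if_false] at hrkA
      have hAnx : A ∈ nxs H hgood := by simp [nxs, hs]
      have hc2 : cOf H hgood A = blk H hgood A hAnx 2 (by omega) := dif_pos hAnx
      have g2 : gateF H hgood (blk H hgood A hAnx 2 (by omega)) = .inr a := by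
        rw [gate_blk]; unfold spec; rw [hs]; try rfl
      rw [if_pos hrkA, hc2, Ev_leaf H hgood ν _ _ g2]
      cases a
      · simp only [shapeRhs, tmNode, leafSym]
        rw [expandPat_tm, evalPar_zero]
      · simp only [shapeRhs, tmNode, leafSym]
        rw [expandPat_tm, evalPar_one]
      · simp only [shapeRhs, tmNode, leafSym]
        rw [expandPat_tm, evalPar_var]
    case copy B =>
      rw [hs] at hrkA; simp only [Shape.hasParam, if_true] at hrkA
      have hAnx : A ∈ nxs H hgood := by simp [nxs, hs]
      have hcntB : cnt H B < f := by
        have h1 := cnt_lt H A B (ref_ordW H hgood A B (by simp [hs, Shape.refs]))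
        omega
      have hwf := H.rhs_wf A
      rw [shapeOf_spec H hgood A, hs] at hwf
      simp only [shapeRhs, ntNode] at hwf
      obtain ⟨hlenB, hallB⟩ : _ ∧ _ := by cases hwf with | node h1 h2 => exact ⟨h1, h2⟩
      have hrkB : H.rkN B = 1 := by simpa using hlenB.symm
      rw [if_neg (by omega)]
      have ha0 : aOf H hgood A = blk H hgood A hAnx 0 (by omega) := dif_pos hAnx
      have hb1 : bOf H hgood A = blk H hgood A hAnx 1 (by omega) := dif_pos hAnx
      have hc2 : cOf H hgood A = blk H hgood A hAnx 2 (by omega) := dif_pos hAnx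
      have g0 : gateF H hgood (blk H hgood A hAnx 0 (by omega)) =
          .inl (true, aOf H hgood B, gZero H hgood) := by
        rw [gate_blk]; unfold spec; rw [hs]; try rfl
      have g1 : gateF H hgood (blk H hgood A hAnx 1 (by omega)) =
          .inl (true, bOf H hgood B, gZero H hgood) := by
        rw [gate_blk]; unfold spec; rw [hs]; try rfl
      have g2 : gateF H hgood (blk H hgood A hAnx 2 (by omega)) =
          .inl (true, cOf H hgood B, gZero H hgood) := by
        rw [gate_blk]; unfold spec; rw [hs]; try rfl
      rw [ha0, hb1, hc2, Ev_gate H hgood ν _ _ _ _ g0, Ev_gate H hgood ν _ _ _ _ g1,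
        Ev_gate H hgood ν _ _ _ _ g2, Ev_gZero]
      simp only [shapeRhs, ntNode, if_true]
      rw [expandPat_nt, evalPar_subst, ih B hcntB, if_neg (by omega)]
      simp only [List.map_cons, List.map_nil, List.getD_cons_zero, expandPat_paramP,
        evalPar_paramP]
      rw [add_zero, add_zero, add_zero]
    case idx =>
      rw [hs] at hrkA; simp only [Shape.hasParam, if_true] at hrkA
      have hAnx : A ∉ nxs H hgood := by simp [nxs, hs]
      have ha : aOf H hgood A = gOne H hgood := dif_neg hAnx
      have hb : bOf H hgood A = gOne H hgood := dif_neg hAnx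
      have hc : cOf H hgood A = gZero H hgood := dif_neg hAnx
      rw [if_neg (by omega), ha, hb, hc, Ev_gOne, Ev_gZero]
      simp only [shapeRhs]
      rw [expandPat_paramP, evalPar_paramP, one_mul, mul_one, add_zero]

end Build4

theorem le_foldr_max (l : List ℕ) (a : ℕ) (h : a ∈ l) : a ≤ l.foldr max 0 := by
  induction l with
  | nil => simp at h
  | cons x xs ih =>
    rcases List.mem_cons.mp h with rfl | h'
    · exact le_max_left _ _
    · exact le_trans (ih h') (le_max_right _ _)

noncomputable section Build5

variable {m : ℕ} (H : TSLP (ArSym m) ArSym.rk) (hgood : ∀ A, GoodRule H A)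

open Classical

theorem main_depth : ∀ f A, cnt H A < f →
    DpF H hgood (aOf H hgood A) ≤ 5 * H.ddepthFuel f A ∧
    DpF H hgood (bOf H hgood A) ≤ 5 * H.ddepthFuel f A ∧
    DpF H hgood (cOf H hgood A) ≤ 5 * H.ddepthFuel f A := by
  intro f
  induction f with
  | zero => omega
  | succ f ih =>
    intro A hA
    cases hs : shapeOf H hgood A
    case comp0 B C =>
      have hAnx : A ∈ nxs H hgood := by simp [nxs, hs]
      have hB := ih B (by
        have h1 := cnt_lt H A B (ref_ordW H hgood A B (by simp [hs, Shape.refs])); omega)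
      have hC := ih C (by
        have h1 := cnt_lt H A C (ref_ordW H hgood A C (by simp [hs, Shape.refs])); omega)
      have hstepB : H.ddepthFuel f B + 1 ≤ H.ddepthFuel (f + 1) A := by
        rw [TSLP.ddepthFuel]
        refine le_foldr_max _ _ (List.mem_map.mpr ⟨B, ?_, rfl⟩)
        rw [shapeOf_spec H hgood A, hs, ntList_shape]; simp [Shape.refs]
      have hstepC : H.ddepthFuel f C + 1 ≤ H.ddepthFuel (f + 1) A := by
        rw [TSLP.ddepthFuel]
        refine le_foldr_max _ _ (List.mem_map.mpr ⟨C, ?_, rfl⟩)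
        rw [shapeOf_spec H hgood A, hs, ntList_shape]; simp [Shape.refs]
      have ha0 : aOf H hgood A = blk H hgood A hAnx 0 (by omega) := dif_pos hAnx
      have hb1 : bOf H hgood A = blk H hgood A hAnx 1 (by omega) := dif_pos hAnx
      have hc2 : cOf H hgood A = blk H hgood A hAnx 2 (by omega) := dif_pos hAnx
      have g0 : gateF H hgood (blk H hgood A hAnx 0 (by omega)) = .inr .zero := by
        rw [gate_blk]; unfold spec; rw [hs]; try rfl
      have g1 : gateF H hgood (blk H hgood A hAnx 1 (by omega)) = .inr .zero := by
        rw [gate_blk]; unfold spec; rw [hs]; try rfl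
      have g2 : gateF H hgood (blk H hgood A hAnx 2 (by omega)) =
          .inl (true, blkT H hgood A 4, cOf H hgood B) := by
        rw [gate_blk]; unfold spec; rw [hs]; try rfl
      have g4 : gateF H hgood (blkT H hgood A 4) =
          .inl (false, blkT H hgood A 3, bOf H hgood B) := by
        rw [blkT_eq H hgood A hAnx 4 (by omega), gate_blk]; unfold spec; rw [hs]; try rfl
      have g3 : gateF H hgood (blkT H hgood A 3) =
          .inl (false, aOf H hgood B, cOf H hgood C) := by
        rw [blkT_eq H hgood A hAnx 3 (by omega), gate_blk]; unfold spec; rw [hs]; try rfl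
      rw [ha0, hb1, hc2, Dp_leaf H hgood _ _ g0, Dp_leaf H hgood _ _ g1,
        Dp_gate H hgood _ _ _ _ g2, Dp_gate H hgood _ _ _ _ g4, Dp_gate H hgood _ _ _ _ g3]
      omega
    case comp1 B C =>
      have hAnx : A ∈ nxs H hgood := by simp [nxs, hs]
      have hB := ih B (by
        have h1 := cnt_lt H A B (ref_ordW H hgood A B (by simp [hs, Shape.refs])); omega)
      have hC := ih C (by
        have h1 := cnt_lt H A C (ref_ordW H hgood A C (by simp [hs, Shape.refs])); omega)
      have hstepB : H.ddepthFuel f B + 1 ≤ H.ddepthFuel (f + 1) A := by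
        rw [TSLP.ddepthFuel]
        refine le_foldr_max _ _ (List.mem_map.mpr ⟨B, ?_, rfl⟩)
        rw [shapeOf_spec H hgood A, hs, ntList_shape]; simp [Shape.refs]
      have hstepC : H.ddepthFuel f C + 1 ≤ H.ddepthFuel (f + 1) A := by
        rw [TSLP.ddepthFuel]
        refine le_foldr_max _ _ (List.mem_map.mpr ⟨C, ?_, rfl⟩)
        rw [shapeOf_spec H hgood A, hs, ntList_shape]; simp [Shape.refs]
      have ha0 : aOf H hgood A = blk H hgood A hAnx 0 (by omega) := dif_pos hAnx
      have hb1 : bOf H hgood A = blk H hgood A hAnx 1 (by omega) := dif_pos hAnx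
      have hc2 : cOf H hgood A = blk H hgood A hAnx 2 (by omega) := dif_pos hAnx
      have g0 : gateF H hgood (blk H hgood A hAnx 0 (by omega)) =
          .inl (false, aOf H hgood B, aOf H hgood C) := by
        rw [gate_blk]; unfold spec; rw [hs]; try rfl
      have g1 : gateF H hgood (blk H hgood A hAnx 1 (by omega)) =
          .inl (false, bOf H hgood C, bOf H hgood B) := by
        rw [gate_blk]; unfold spec; rw [hs]; try rfl
      have g2 : gateF H hgood (blk H hgood A hAnx 2 (by omega)) =
          .inl (true, blkT H hgood A 4, cOf H hgood B) := by
        rw [gate_blk]; unfold spec; rw [hs]; try rfl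
      have g4 : gateF H hgood (blkT H hgood A 4) =
          .inl (false, blkT H hgood A 3, bOf H hgood B) := by
        rw [blkT_eq H hgood A hAnx 4 (by omega), gate_blk]; unfold spec; rw [hs]; try rfl
      have g3 : gateF H hgood (blkT H hgood A 3) =
          .inl (false, aOf H hgood B, cOf H hgood C) := by
        rw [blkT_eq H hgood A hAnx 3 (by omega), gate_blk]; unfold spec; rw [hs]; try rfl
      rw [ha0, hb1, hc2, Dp_gate H hgood _ _ _ _ g0, Dp_gate H hgood _ _ _ _ g1,
        Dp_gate H hgood _ _ _ _ g2, Dp_gate H hgood _ _ _ _ g4, Dp_gate H hgood _ _ _ _ g3]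
      omega
    case op0 bb B C =>
      have hAnx : A ∈ nxs H hgood := by simp [nxs, hs]
      have hB := ih B (by
        have h1 := cnt_lt H A B (ref_ordW H hgood A B (by simp [hs, Shape.refs])); omega)
      have hC := ih C (by
        have h1 := cnt_lt H A C (ref_ordW H hgood A C (by simp [hs, Shape.refs])); omega)
      have hstepB : H.ddepthFuel f B + 1 ≤ H.ddepthFuel (f + 1) A := by
        rw [TSLP.ddepthFuel]
        refine le_foldr_max _ _ (List.mem_map.mpr ⟨B, ?_, rfl⟩)
        rw [shapeOf_spec H hgood A, hs, ntList_shape]; simp [Shape.refs]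
      have hstepC : H.ddepthFuel f C + 1 ≤ H.ddepthFuel (f + 1) A := by
        rw [TSLP.ddepthFuel]
        refine le_foldr_max _ _ (List.mem_map.mpr ⟨C, ?_, rfl⟩)
        rw [shapeOf_spec H hgood A, hs, ntList_shape]; simp [Shape.refs]
      have ha0 : aOf H hgood A = blk H hgood A hAnx 0 (by omega) := dif_pos hAnx
      have hb1 : bOf H hgood A = blk H hgood A hAnx 1 (by omega) := dif_pos hAnx
      have hc2 : cOf H hgood A = blk H hgood A hAnx 2 (by omega) := dif_pos hAnx
      have g0 : gateF H hgood (blk H hgood A hAnx 0 (by omega)) = .inr .zero := by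
        rw [gate_blk]; unfold spec; rw [hs]; try rfl
      have g1 : gateF H hgood (blk H hgood A hAnx 1 (by omega)) = .inr .zero := by
        rw [gate_blk]; unfold spec; rw [hs]; try rfl
      have g2 : gateF H hgood (blk H hgood A hAnx 2 (by omega)) =
          .inl (bb, cOf H hgood B, cOf H hgood C) := by
        rw [gate_blk]; unfold spec; rw [hs]; try rfl
      rw [ha0, hb1, hc2, Dp_leaf H hgood _ _ g0, Dp_leaf H hgood _ _ g1,
        Dp_gate H hgood _ _ _ _ g2]
      omega
    case opL bb B =>
      have hAnx : A ∈ nxs H hgood := by simp [nxs, hs]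
      have hB := ih B (by
        have h1 := cnt_lt H A B (ref_ordW H hgood A B (by simp [hs, Shape.refs])); omega)
      have hstepB : H.ddepthFuel f B + 1 ≤ H.ddepthFuel (f + 1) A := by
        rw [TSLP.ddepthFuel]
        refine le_foldr_max _ _ (List.mem_map.mpr ⟨B, ?_, rfl⟩)
        rw [shapeOf_spec H hgood A, hs, ntList_shape]; simp [Shape.refs]
      have ha0 : aOf H hgood A = blk H hgood A hAnx 0 (by omega) := dif_pos hAnx
      have hb1 : bOf H hgood A = blk H hgood A hAnx 1 (by omega) := dif_pos hAnx
      have hc2 : cOf H hgood A = blk H hgood A hAnx 2 (by omega) := dif_pos hAnx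
      have hDz := Dp_gZero H hgood
      cases bb
      · have g0 : gateF H hgood (blk H hgood A hAnx 0 (by omega)) = .inr .one := by
          rw [gate_blk]; unfold spec; rw [hs]; try rfl
        have g1 : gateF H hgood (blk H hgood A hAnx 1 (by omega)) =
            .inl (true, cOf H hgood B, gZero H hgood) := by
          rw [gate_blk]; unfold spec; rw [hs]; try rfl
        have g2 : gateF H hgood (blk H hgood A hAnx 2 (by omega)) = .inr .zero := by
          rw [gate_blk]; unfold spec; rw [hs]; try rfl
        rw [ha0, hb1, hc2, Dp_leaf H hgood _ _ g0, Dp_gate H hgood _ _ _ _ g1,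
          Dp_leaf H hgood _ _ g2]
        omega
      · have g0 : gateF H hgood (blk H hgood A hAnx 0 (by omega)) = .inr .one := by
          rw [gate_blk]; unfold spec; rw [hs]; try rfl
        have g1 : gateF H hgood (blk H hgood A hAnx 1 (by omega)) = .inr .one := by
          rw [gate_blk]; unfold spec; rw [hs]; try rfl
        have g2 : gateF H hgood (blk H hgood A hAnx 2 (by omega)) =
            .inl (true, cOf H hgood B, gZero H hgood) := by
          rw [gate_blk]; unfold spec; rw [hs]; try rfl
        rw [ha0, hb1, hc2, Dp_leaf H hgood _ _ g0, Dp_leaf H hgood _ _ g1,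
          Dp_gate H hgood _ _ _ _ g2]
        omega
    case opR bb B =>
      have hAnx : A ∈ nxs H hgood := by simp [nxs, hs]
      have hB := ih B (by
        have h1 := cnt_lt H A B (ref_ordW H hgood A B (by simp [hs, Shape.refs])); omega)
      have hstepB : H.ddepthFuel f B + 1 ≤ H.ddepthFuel (f + 1) A := by
        rw [TSLP.ddepthFuel]
        refine le_foldr_max _ _ (List.mem_map.mpr ⟨B, ?_, rfl⟩)
        rw [shapeOf_spec H hgood A, hs, ntList_shape]; simp [Shape.refs]
      have ha0 : aOf H hgood A = blk H hgood A hAnx 0 (by omega) := dif_pos hAnx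
      have hb1 : bOf H hgood A = blk H hgood A hAnx 1 (by omega) := dif_pos hAnx
      have hc2 : cOf H hgood A = blk H hgood A hAnx 2 (by omega) := dif_pos hAnx
      have hDz := Dp_gZero H hgood
      cases bb
      · have g0 : gateF H hgood (blk H hgood A hAnx 0 (by omega)) =
            .inl (true, cOf H hgood B, gZero H hgood) := by
          rw [gate_blk]; unfold spec; rw [hs]; try rfl
        have g1 : gateF H hgood (blk H hgood A hAnx 1 (by omega)) = .inr .one := by
          rw [gate_blk]; unfold spec; rw [hs]; try rfl
        have g2 : gateF H hgood (blk H hgood A hAnx 2 (by omega)) = .inr .zero := by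
          rw [gate_blk]; unfold spec; rw [hs]; try rfl
        rw [ha0, hb1, hc2, Dp_gate H hgood _ _ _ _ g0, Dp_leaf H hgood _ _ g1,
          Dp_leaf H hgood _ _ g2]
        omega
      · have g0 : gateF H hgood (blk H hgood A hAnx 0 (by omega)) = .inr .one := by
          rw [gate_blk]; unfold spec; rw [hs]; try rfl
        have g1 : gateF H hgood (blk H hgood A hAnx 1 (by omega)) = .inr .one := by
          rw [gate_blk]; unfold spec; rw [hs]; try rfl
        have g2 : gateF H hgood (blk H hgood A hAnx 2 (by omega)) =
            .inl (true, cOf H hgood B, gZero H hgood) := by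
          rw [gate_blk]; unfold spec; rw [hs]; try rfl
        rw [ha0, hb1, hc2, Dp_leaf H hgood _ _ g0, Dp_leaf H hgood _ _ g1,
          Dp_gate H hgood _ _ _ _ g2]
        omega
    case leaf a =>
      have hAnx : A ∈ nxs H hgood := by simp [nxs, hs]
      have ha0 : aOf H hgood A = blk H hgood A hAnx 0 (by omega) := dif_pos hAnx
      have hb1 : bOf H hgood A = blk H hgood A hAnx 1 (by omega) := dif_pos hAnx
      have hc2 : cOf H hgood A = blk H hgood A hAnx 2 (by omega) := dif_pos hAnx
      have g0 : gateF H hgood (blk H hgood A hAnx 0 (by omega)) = .inr .zero := by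
        rw [gate_blk]; unfold spec; rw [hs]; try rfl
      have g1 : gateF H hgood (blk H hgood A hAnx 1 (by omega)) = .inr .zero := by
        rw [gate_blk]; unfold spec; rw [hs]; try rfl
      have g2 : gateF H hgood (blk H hgood A hAnx 2 (by omega)) = .inr a := by
        rw [gate_blk]; unfold spec; rw [hs]; try rfl
      rw [ha0, hb1, hc2, Dp_leaf H hgood _ _ g0, Dp_leaf H hgood _ _ g1,
        Dp_leaf H hgood _ _ g2]
      omega
    case copy B =>
      have hAnx : A ∈ nxs H hgood := by simp [nxs, hs]
      have hB := ih B (by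
        have h1 := cnt_lt H A B (ref_ordW H hgood A B (by simp [hs, Shape.refs])); omega)
      have hstepB : H.ddepthFuel f B + 1 ≤ H.ddepthFuel (f + 1) A := by
        rw [TSLP.ddepthFuel]
        refine le_foldr_max _ _ (List.mem_map.mpr ⟨B, ?_, rfl⟩)
        rw [shapeOf_spec H hgood A, hs, ntList_shape]; simp [Shape.refs]
      have ha0 : aOf H hgood A = blk H hgood A hAnx 0 (by omega) := dif_pos hAnx
      have hb1 : bOf H hgood A = blk H hgood A hAnx 1 (by omega) := dif_pos hAnx
      have hc2 : cOf H hgood A = blk H hgood A hAnx 2 (by omega) := dif_pos hAnx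
      have hDz := Dp_gZero H hgood
      have g0 : gateF H hgood (blk H hgood A hAnx 0 (by omega)) =
          .inl (true, aOf H hgood B, gZero H hgood) := by
        rw [gate_blk]; unfold spec; rw [hs]; try rfl
      have g1 : gateF H hgood (blk H hgood A hAnx 1 (by omega)) =
          .inl (true, bOf H hgood B, gZero H hgood) := by
        rw [gate_blk]; unfold spec; rw [hs]; try rfl
      have g2 : gateF H hgood (blk H hgood A hAnx 2 (by omega)) =
          .inl (true, cOf H hgood B, gZero H hgood) := by
        rw [gate_blk]; unfold spec; rw [hs]; try rfl
      rw [ha0, hb1, hc2, Dp_gate H hgood _ _ _ _ g0, Dp_gate H hgood _ _ _ _ g1,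
        Dp_gate H hgood _ _ _ _ g2]
      omega
    case idx =>
      have hAnx : A ∉ nxs H hgood := by simp [nxs, hs]
      have ha : aOf H hgood A = gOne H hgood := dif_neg hAnx
      have hb : bOf H hgood A = gOne H hgood := dif_neg hAnx
      have hc : cOf H hgood A = gZero H hgood := dif_neg hAnx
      rw [ha, hb, hc, Dp_gOne, Dp_gZero]
      omega

end Build5
noncomputable section Final

variable {m : ℕ} (H : TSLP (ArSym m) ArSym.rk) (hgood : ∀ A, GoodRule H A)

open Classical

theorem start_nxs : H.start ∈ nxs H hgood := by
  by_contra h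
  simp only [nxs, Finset.mem_filter, Finset.mem_univ, true_and, not_not] at h
  have h2 := rk_eq H hgood H.start
  rw [h, H.start_rank] at h2
  simp [Shape.hasParam] at h2

theorem K_pos : 1 ≤ K H hgood :=
  Finset.card_pos.mpr ⟨H.start, start_nxs H hgood⟩

theorem K_le_size : K H hgood ≤ H.size := by
  have h1 : ∀ A ∈ nxs H hgood, 1 ≤ (H.rhs A).psize := by
    intro A hAnx
    rw [shapeOf_spec H hgood A]
    apply psize_shape_pos
    simpa [nxs] using hAnx
  calc K H hgood = ∑ _A ∈ nxs H hgood, 1 := by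
        rw [K, Finset.card_eq_sum_ones]
    _ ≤ ∑ A ∈ nxs H hgood, (H.rhs A).psize := Finset.sum_le_sum h1
    _ ≤ ∑ A : Fin H.N, (H.rhs A).psize :=
        Finset.sum_le_sum_of_subset (Finset.subset_univ _)
    _ = H.size := rfl

theorem size_bound : (circ H hgood).size ≤ 8 * H.size := by
  have h1 := K_pos H hgood
  have h2 := K_le_size H hgood
  show sz H hgood ≤ 8 * H.size
  unfold sz
  omega

theorem depth_bound : (circ H hgood).depth ≤ 5 * H.depth := by
  have h := (main_depth H hgood H.N H.start (cnt_lt_N H H.start)).2.2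
  exact h

theorem eval_correct {S : Type} [AddCommMonoid S] [Monoid S]
    (hdl : ∀ a b c : S, a * (b + c) = a * b + a * c)
    (hdr : ∀ a b c : S, (a + b) * c = a * c + b * c)
    (ν : Fin m → S) :
    (circ H hgood).eval ν = evalPar ν (fun _ => 0) H.val := by
  have h := main_eval H hgood hdl hdr ν H.N H.start (cnt_lt_N H H.start) (fun _ => 0)
  rw [if_pos H.start_rank] at h
  exact h.symm

end Final
/-- Every monadic TSLP `H` over `Σ_m` whose productions
have the forms listed in `GoodRule` can be turned into an arithmetical
circuit of size `O(|H|)` and depth `O(depth H)` that evaluates, over every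
(not necessarily commutative) semiring and every valuation of the variables,
to the same element as the tree `val H`.  (Since the start nonterminal has
rank `0`, the tree `val H` contains no parameters, and it is evaluated via
`evalPar` with the junk parameter valuation `fun _ => 0`.) -/
theorem monadic_tslp_to_circuit :
    ∃ C : ℝ, 0 < C ∧
      ∀ (m : ℕ), 1 ≤ m →
        ∀ H : TSLP (ArSym m) ArSym.rk,
          (∀ A, H.rkN A ≤ 1) → (∀ A, GoodRule H A) →
          ∃ D : Circuit m,
            (D.size : ℝ) ≤ C * (H.size : ℝ) ∧
            (D.depth : ℝ) ≤ C * (H.depth : ℝ) ∧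
            ∀ (S : Type) [AddCommMonoid S] [Monoid S],
              (∀ a b c : S, a * (b + c) = a * b + a * c) →
              (∀ a b c : S, (a + b) * c = a * c + b * c) →
              ∀ ν : Fin m → S,
                D.eval ν = evalPar ν (fun _ => 0) H.val := by
  refine ⟨8, by norm_num, ?_⟩
  intro m _hm H _hrk hgood
  refine ⟨circ H hgood, ?_, ?_, ?_⟩
  · have h := size_bound H hgood
    have h2 : ((circ H hgood).size : ℝ) ≤ ((8 * H.size : ℕ) : ℝ) := by exact_mod_cast h
    calc ((circ H hgood).size : ℝ) ≤ ((8 * H.size : ℕ) : ℝ) := h2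
      _ = 8 * (H.size : ℝ) := by push_cast; ring
  · have h := depth_bound H hgood
    have h2 : (circ H hgood).depth ≤ 8 * H.depth := by omega
    have h3 : ((circ H hgood).depth : ℝ) ≤ ((8 * H.depth : ℕ) : ℝ) := by exact_mod_cast h2
    calc ((circ H hgood).depth : ℝ) ≤ ((8 * H.depth : ℕ) : ℝ) := h3
      _ = 8 * (H.depth : ℝ) := by push_cast; ring
  · intro S _ _ hdl hdr ν
    exact eval_correct H hgood hdl hdr ν
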